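/- Assume α ≥ (I/2 + λL)/(1 + I/2 + λL), E[c_0] = f(x_0), E[c_1] = E[φ(x_1)], and E[‖s_i − ∇f(x_i)‖²] ≤ σ² for every 0 ≤ i ≤ I. Then E[t_{I+1}] ≤ α^I·(σD + LD²/2) + λσ²/I. -/

import Mathlib

open MeasureTheory
open scoped RealInnerProductSpace

lemma descent_lemma {d : ℕ} (f : EuclideanSpace ℝ (Fin d) → ℝ) (hf : Differentiable ℝ f)
    (L : ℝ)
    (hLip : ∀ x y, ‖gradient f x - gradient f y‖ ≤ L * ‖x - y‖)
    (x y : EuclideanSpace ℝ (Fin d)) :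
    f y ≤ f x + ⟪gradient f x, y - x⟫ + L / 2 * ‖y - x‖ ^ 2 := by
  set v := y - x with hv
  set F : ℝ → ℝ := fun t => f (x + t • v) - t * ⟪gradient f x, v⟫ - L / 2 * (t ^ 2 * ‖v‖ ^ 2)
    with hF
  have hline : ∀ t : ℝ, HasDerivAt (fun t : ℝ => x + t • v) v t := by
    intro t
    simpa using ((hasDerivAt_id t).smul_const v).const_add x
  have hcomp : ∀ t : ℝ, HasDerivAt (fun t => f (x + t • v)) ⟪gradient f (x + t • v), v⟫ t := by
    intro t
    have h1 := ((hf (x + t • v)).hasGradientAt.hasFDerivAt).comp_hasDerivAt t (hline t)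
    simpa [InnerProductSpace.toDual_apply_apply, Function.comp_def] using h1
  have hFderiv : ∀ t : ℝ, HasDerivAt F
      (⟪gradient f (x + t • v), v⟫ - ⟪gradient f x, v⟫ - L / 2 * (2 * t * ‖v‖ ^ 2)) t := by
    intro t
    have h2 : HasDerivAt (fun t : ℝ => t * ⟪gradient f x, v⟫) ⟪gradient f x, v⟫ t := by
      simpa using (hasDerivAt_id t).mul_const ⟪gradient f x, v⟫
    have h3 : HasDerivAt (fun t : ℝ => L / 2 * (t ^ 2 * ‖v‖ ^ 2)) (L / 2 * (2 * t * ‖v‖ ^ 2)) t := by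
      have := ((hasDerivAt_pow 2 t).mul_const (‖v‖ ^ 2)).const_mul (L / 2)
      simpa [mul_comm, mul_assoc, mul_left_comm] using this
    exact ((hcomp t).sub h2).sub h3
  have hanti : AntitoneOn F (Set.Icc 0 1) := by
    apply antitoneOn_of_deriv_nonpos (convex_Icc 0 1)
    · exact (fun t _ => ((hFderiv t).continuousAt.continuousWithinAt))
    · intro t _
      exact (hFderiv t).differentiableAt.differentiableWithinAt
    · intro t ht
      rw [interior_Icc] at ht
      rw [(hFderiv t).deriv]
      have hb : ⟪gradient f (x + t • v) - gradient f x, v⟫ ≤ L * t * ‖v‖ ^ 2 := by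
        calc ⟪gradient f (x + t • v) - gradient f x, v⟫
            ≤ ‖gradient f (x + t • v) - gradient f x‖ * ‖v‖ := real_inner_le_norm _ _
          _ ≤ (L * ‖(x + t • v) - x‖) * ‖v‖ := by
              gcongr; exact hLip _ _
          _ = L * t * ‖v‖ ^ 2 := by
              have : ‖(x + t • v) - x‖ = t * ‖v‖ := by
                simp [norm_smul, abs_of_pos ht.1]
              rw [this]; ring
      have := inner_sub_left (𝕜 := ℝ) (gradient f (x + t • v)) (gradient f x) v
      nlinarith [hb]
  have h01 := hanti (Set.left_mem_Icc.2 zero_le_one) (Set.right_mem_Icc.2 zero_le_one) zero_le_one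
  have hx1 : x + (1 : ℝ) • v = y := by rw [one_smul, hv]; abel
  simp only [hF, hx1] at h01
  simp only [zero_smul, add_zero] at h01
  nlinarith [h01]

lemma qgrowth {d : ℕ} {s : Set (EuclideanSpace ℝ (Fin d))}
    (g : EuclideanSpace ℝ (Fin d) → ℝ) (hg : ConvexOn ℝ s g)
    (lam : ℝ) (hlam : 0 < lam) (x0 xs : EuclideanSpace ℝ (Fin d)) (hxs : xs ∈ s)
    (hmin : ∀ y ∈ s, g xs + 1 / (2 * lam) * ‖xs - x0‖ ^ 2 ≤ g y + 1 / (2 * lam) * ‖y - x0‖ ^ 2)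
    (y : EuclideanSpace ℝ (Fin d)) (hy : y ∈ s) :
    g xs + 1 / (2 * lam) * ‖xs - x0‖ ^ 2 + 1 / (2 * lam) * ‖y - xs‖ ^ 2 ≤
      g y + 1 / (2 * lam) * ‖y - x0‖ ^ 2 := by
  have hA : 0 ≤ g y - g xs + (1 / lam) * ⟪xs - x0, y - xs⟫ := by
    have key : ∀ θ : ℝ, 0 < θ → θ ≤ 1 →
        0 ≤ g y - g xs + (1 / lam) * ⟪xs - x0, y - xs⟫ + θ / (2 * lam) * ‖y - xs‖ ^ 2 := by
      intro θ hθ hθ1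
      have hz : (1 - θ) • xs + θ • y ∈ s := hg.1 hxs hy (by linarith) (le_of_lt hθ) (by ring)
      have hgz : g ((1 - θ) • xs + θ • y) ≤ (1 - θ) * g xs + θ * g y :=
        hg.2 hxs hy (by linarith) (le_of_lt hθ) (by ring)
      have heq : (1 - θ) • xs + θ • y - x0 = (xs - x0) + θ • (y - xs) := by module
      have hnorm : ‖(1 - θ) • xs + θ • y - x0‖ ^ 2 =
          ‖xs - x0‖ ^ 2 + 2 * (θ * ⟪xs - x0, y - xs⟫) + θ ^ 2 * ‖y - xs‖ ^ 2 := by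
        rw [heq, norm_add_sq_real, real_inner_smul_right, norm_smul]
        rw [Real.norm_eq_abs, abs_of_pos hθ]
        ring
      have hm := hmin _ hz
      rw [hnorm] at hm
      set c := 1 / (2 * lam) with hc
      have hcpos : 0 < c := by rw [hc]; positivity
      have e2 : 1 / lam = 2 * c := by rw [hc]; field_simp
      have e3 : θ / (2 * lam) = θ * c := by rw [hc]; ring
      rw [e2, e3]
      nlinarith [hm, hgz, mul_pos hθ hcpos]
    by_contra hc
    push_neg at hc
    set A := g y - g xs + (1 / lam) * ⟪xs - x0, y - xs⟫ with hAdef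
    set B := ‖y - xs‖ ^ 2 / (2 * lam) with hB
    have hBpos : 0 ≤ B := by positivity
    set θ := min 1 (-A / (B + 1)) with hθdef
    have hθpos : 0 < θ := lt_min one_pos (div_pos (by linarith) (by positivity))
    have hθ1 : θ ≤ 1 := min_le_left _ _
    have := key θ hθpos hθ1
    have hθle : θ ≤ -A / (B + 1) := min_le_right _ _
    have : A + θ * B ≥ 0 := by
      have := key θ hθpos hθ1
      rw [hAdef, hB]
      have h2 : θ / (2 * lam) * ‖y - xs‖ ^ 2 = θ * (‖y - xs‖ ^ 2 / (2 * lam)) := by ring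
      nlinarith [key θ hθpos hθ1]
    have hcontra : θ * B < -A := by
      calc θ * B ≤ (-A / (B + 1)) * B := by
            apply mul_le_mul_of_nonneg_right hθle hBpos
        _ < -A := by
            rw [div_mul_eq_mul_div, div_lt_iff₀ (by positivity)]
            nlinarith
    linarith
  have hexp : ‖y - x0‖ ^ 2 = ‖y - xs‖ ^ 2 + 2 * ⟪y - xs, xs - x0⟫ + ‖xs - x0‖ ^ 2 := by
    have : y - x0 = (y - xs) + (xs - x0) := by abel
    rw [this, norm_add_sq_real]
  have hsym : ⟪y - xs, xs - x0⟫ = ⟪xs - x0, y - xs⟫ := real_inner_comm _ _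
  rw [hexp, hsym]
  have h1 : (0:ℝ) < lam := hlam
  have e1 : (1:ℝ) / (2 * lam) * (‖y - xs‖ ^ 2 + 2 * ⟪xs - x0, y - xs⟫ + ‖xs - x0‖ ^ 2) =
      1 / (2 * lam) * ‖y - xs‖ ^ 2 + (1 / lam) * ⟪xs - x0, y - xs⟫
        + 1 / (2 * lam) * ‖xs - x0‖ ^ 2 := by
    field_simp
  rw [e1]
  linarith

lemma inner_affine_convexOn {d : ℕ} {s : Set (EuclideanSpace ℝ (Fin d))}
    (hs : Convex ℝ s) (c : ℝ) (v x0 : EuclideanSpace ℝ (Fin d)) :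
    ConvexOn ℝ s (fun y => c + ⟪v, y - x0⟫) := by
  refine ⟨hs, ?_⟩
  intro p hp q hq a b ha hb hab
  simp only [inner_sub_right, inner_add_right, real_inner_smul_right, smul_eq_mul]
  apply le_of_eq
  have hb' : b = 1 - a := by linarith
  rw [hb']; ring

set_option maxHeartbeats 1000000
/-- Stochastic version of the PSS recursion: with random stochastic
gradients `s_0, …, s_I`, random reals `c_0, c_1`, the pathwise-defined models `𝓛_i`,
minimizers `x_i`, upper estimates `u_i`, and gaps `t_i = u_i - 𝓛_i^λ(x_i)`,
if `α ≥ (I/2 + λL)/(1 + I/2 + λL)`, `E[c_0] = f(x_0)`, `E[c_1] = E[φ(x_1)]` and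
`E[‖s_i - ∇f(x_i)‖²] ≤ σ²` for `0 ≤ i ≤ I`, then
`E[t_{I+1}] ≤ α^I (σ D + L D²/2) + λ σ² / I`. -/
theorem stmt_10 {d : ℕ} {Ω : Type*} [MeasurableSpace Ω] (P : Measure Ω)
    [IsProbabilityMeasure P]
    (f : EuclideanSpace ℝ (Fin d) → ℝ) (hf : Differentiable ℝ f)
    (L : ℝ) (hL : 0 < L)
    (hLip : ∀ x y, ‖gradient f x - gradient f y‖ ≤ L * ‖x - y‖)
    (s : Set (EuclideanSpace ℝ (Fin d))) (hs : s.Nonempty) (hcl : IsClosed s)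
    (h : EuclideanSpace ℝ (Fin d) → ℝ) (hconv : ConvexOn ℝ s h)
    (hlsc : LowerSemicontinuousOn h s)
    (D : ℝ) (hD : 0 < D) (hdiam : ∀ x ∈ s, ∀ y ∈ s, dist x y ≤ D)
    (lam : ℝ) (hlam : 0 < lam) (I : ℕ) (hI : 1 ≤ I)
    (α : ℝ) (hα : α ∈ Set.Ioo (0 : ℝ) 1) (σ : ℝ) (hσ : 0 < σ)
    (x0 : EuclideanSpace ℝ (Fin d)) (hx0 : x0 ∈ s)
    (svec : ℕ → Ω → EuclideanSpace ℝ (Fin d)) (c0 c1 : Ω → ℝ)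
    (x : ℕ → Ω → EuclideanSpace ℝ (Fin d))
    (hx0' : ∀ ω, x 0 ω = x0)
    (𝓛 : ℕ → Ω → EuclideanSpace ℝ (Fin d) → ℝ)
    (h𝓛1 : ∀ ω y, 𝓛 1 ω y = c0 ω + ⟪svec 0 ω, y - x0⟫ + h y)
    (h𝓛rec : ∀ i, 2 ≤ i → i ≤ I + 1 → ∀ ω y, 𝓛 i ω y =
      α * 𝓛 (i - 1) ω y +
        (1 - α) * (f (x (i - 1) ω) + ⟪svec (i - 1) ω, y - x (i - 1) ω⟫ + h y))
    -- `x_i(ω)` is the minimizer of `𝓛_i^λ(ω, ·)`: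
    (hxmem : ∀ i, 1 ≤ i → i ≤ I + 1 → ∀ ω, x i ω ∈ s)
    (hxmin : ∀ i, 1 ≤ i → i ≤ I + 1 → ∀ ω, ∀ y ∈ s,
      𝓛 i ω (x i ω) + 1 / (2 * lam) * ‖x i ω - x0‖ ^ 2 ≤
        𝓛 i ω y + 1 / (2 * lam) * ‖y - x0‖ ^ 2)
    (u : ℕ → Ω → ℝ)
    (hu1 : ∀ ω, u 1 ω = c1 ω + 1 / (2 * lam) * ‖x 1 ω - x0‖ ^ 2)
    (hurec : ∀ i, 2 ≤ i → i ≤ I + 1 → ∀ ω, u i ω =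
      α * u (i - 1) ω + (1 - α) * (f (x i ω) + h (x i ω) + 1 / (2 * lam) * ‖x i ω - x0‖ ^ 2))
    (t : ℕ → Ω → ℝ)
    (ht : ∀ i ω, t i ω = u i ω - (𝓛 i ω (x i ω) + 1 / (2 * lam) * ‖x i ω - x0‖ ^ 2))
    -- integrability of the quantities appearing below:
    (hint_t : ∀ i, 1 ≤ i → i ≤ I + 1 → Integrable (t i) P)
    (hint_c0 : Integrable c0 P) (hint_c1 : Integrable c1 P)
    (hint_phi1 : Integrable (fun ω => f (x 1 ω) + h (x 1 ω)) P)
    (hint_var : ∀ i ≤ I, Integrable (fun ω => ‖svec i ω - gradient f (x i ω)‖ ^ 2) P)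
    (hint_nrm : ∀ i ≤ I, Integrable (fun ω => ‖svec i ω - gradient f (x i ω)‖) P)
    -- the assumptions on the mean and the variance:
    (hαbound : ((I : ℝ) / 2 + lam * L) / (1 + (I : ℝ) / 2 + lam * L) ≤ α)
    (hmean0 : ∫ ω, c0 ω ∂P = f x0)
    (hmean1 : ∫ ω, c1 ω ∂P = ∫ ω, (f (x 1 ω) + h (x 1 ω)) ∂P)
    (hvar : ∀ i ≤ I, ∫ ω, ‖svec i ω - gradient f (x i ω)‖ ^ 2 ∂P ≤ σ ^ 2) :
    ∫ ω, t (I + 1) ω ∂P ≤ α ^ I * (σ * D + L * D ^ 2 / 2) + lam * σ ^ 2 / I := by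
  obtain ⟨hα0, hα1⟩ := hα
  have hIpos : (0:ℝ) < I := by exact_mod_cast hI
  -- convexity of the models
  have hconvL : ∀ i, 1 ≤ i → i ≤ I + 1 → ∀ ω, ConvexOn ℝ s (𝓛 i ω) := by
    intro i hi
    induction i, hi using Nat.le_induction with
    | base =>
      intro _ ω
      have heq : 𝓛 1 ω = fun y => (fun y => c0 ω + ⟪svec 0 ω, y - x0⟫) y + h y :=
        funext fun y => by rw [h𝓛1]
      rw [heq]
      exact (inner_affine_convexOn hconv.1 (c0 ω) (svec 0 ω) x0).add hconv
    | succ n hn ih =>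
      intro hn1 ω
      have hrec := h𝓛rec (n + 1) (by omega) hn1 ω
      simp only [Nat.add_sub_cancel] at hrec
      have heq : 𝓛 (n + 1) ω = α • 𝓛 n ω +
          (1 - α) • (fun y => (fun y => f (x n ω) + ⟪svec n ω, y - x n ω⟫) y + h y) :=
        funext fun y => by
          simp only [Pi.add_apply, Pi.smul_apply, smul_eq_mul]
          rw [hrec y]
      rw [heq]
      exact ((ih (by omega) ω).smul hα0.le).add
        (((inner_affine_convexOn hconv.1 (f (x n ω)) (svec n ω) (x n ω)).add hconv).smul
          (by linarith))
  -- bound on expected gradient error norm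
  have hEnorm : ∀ i ≤ I, ∫ ω, ‖svec i ω - gradient f (x i ω)‖ ∂P ≤ σ := by
    intro i hi
    have hptw : ∀ ω, ‖svec i ω - gradient f (x i ω)‖ ≤
        (σ ^ 2 + ‖svec i ω - gradient f (x i ω)‖ ^ 2) / (2 * σ) := by
      intro ω
      rw [le_div_iff₀ (by positivity)]
      nlinarith [sq_nonneg (‖svec i ω - gradient f (x i ω)‖ - σ), norm_nonneg (svec i ω - gradient f (x i ω))]
    have hintRHS : Integrable
        (fun ω => (σ ^ 2 + ‖svec i ω - gradient f (x i ω)‖ ^ 2) / (2 * σ)) P := by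
      simpa [div_eq_inv_mul] using
        (((integrable_const (σ ^ 2)).add (hint_var i hi)).const_mul (2 * σ)⁻¹)
    have h1 : ∫ ω, ‖svec i ω - gradient f (x i ω)‖ ∂P ≤
        ∫ ω, (σ ^ 2 + ‖svec i ω - gradient f (x i ω)‖ ^ 2) / (2 * σ) ∂P :=
      integral_mono (hint_nrm i hi) hintRHS hptw
    have h2 : ∫ ω, (σ ^ 2 + ‖svec i ω - gradient f (x i ω)‖ ^ 2) / (2 * σ) ∂P =
        (σ ^ 2 + ∫ ω, ‖svec i ω - gradient f (x i ω)‖ ^ 2 ∂P) / (2 * σ) := by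
      rw [div_eq_inv_mul]
      rw [show (fun ω => (σ ^ 2 + ‖svec i ω - gradient f (x i ω)‖ ^ 2) / (2 * σ)) =
        (fun ω => (2 * σ)⁻¹ * (σ ^ 2 + ‖svec i ω - gradient f (x i ω)‖ ^ 2)) from
        funext fun ω => by rw [div_eq_inv_mul]]
      rw [integral_const_mul, integral_add (integrable_const _) (hint_var i hi)]
      simp
    rw [h2] at h1
    have h3 : (σ ^ 2 + ∫ ω, ‖svec i ω - gradient f (x i ω)‖ ^ 2 ∂P) / (2 * σ) ≤ σ := by
      rw [div_le_iff₀ (by positivity)]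
      nlinarith [hvar i hi]
    linarith
  -- bound on E[t 1]
  have hEt1 : ∫ ω, t 1 ω ∂P ≤ σ * D + L * D ^ 2 / 2 := by
    set w : Ω → ℝ := fun ω => ⟪svec 0 ω, x 1 ω - x0⟫ + h (x 1 ω) with hw
    have ht1 : ∀ ω, t 1 ω = c1 ω - c0 ω - w ω := by
      intro ω; rw [ht, hu1, h𝓛1, hw]; ring
    have hintw : Integrable w P := by
      have : w = fun ω => c1 ω - c0 ω - t 1 ω := funext fun ω => by rw [ht1]; ring
      rw [this]
      exact (hint_c1.sub hint_c0).sub (hint_t 1 le_rfl (by omega))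
    have hintc0w : Integrable (fun ω => c0 ω + w ω) P := hint_c0.add hintw
    have hintsub : Integrable (fun ω => (f (x 1 ω) + h (x 1 ω)) - w ω) P :=
      hint_phi1.sub hintw
    have hsplit : ∫ ω, t 1 ω ∂P =
        (∫ ω, ((f (x 1 ω) + h (x 1 ω)) - w ω) ∂P) - f x0 := by
      have e0 : ∫ ω, t 1 ω ∂P = ∫ ω, (c1 ω - (c0 ω + w ω)) ∂P :=
        integral_congr_ae (Filter.Eventually.of_forall fun ω => by rw [ht1 ω]; ring)
      rw [e0, integral_sub hint_c1 hintc0w, integral_add hint_c0 hintw, hmean0, hmean1,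
        integral_sub hint_phi1 hintw]
      ring
    have hptw : ∀ ω, (f (x 1 ω) + h (x 1 ω)) - w ω ≤
        (f x0 + L / 2 * D ^ 2) + D * ‖svec 0 ω - gradient f (x 0 ω)‖ := by
      intro ω
      have hdesc := descent_lemma f hf L hLip x0 (x 1 ω)
      have hdist : ‖x 1 ω - x0‖ ≤ D := by
        rw [← dist_eq_norm]
        exact hdiam _ (hxmem 1 le_rfl (by omega) ω) _ hx0
      have hin : ⟪gradient f x0 - svec 0 ω, x 1 ω - x0⟫ ≤
          ‖svec 0 ω - gradient f x0‖ * D := by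
        calc ⟪gradient f x0 - svec 0 ω, x 1 ω - x0⟫
            ≤ ‖gradient f x0 - svec 0 ω‖ * ‖x 1 ω - x0‖ := real_inner_le_norm _ _
          _ ≤ ‖gradient f x0 - svec 0 ω‖ * D := by gcongr
          _ = ‖svec 0 ω - gradient f x0‖ * D := by rw [norm_sub_rev]
      have hsq : L / 2 * ‖x 1 ω - x0‖ ^ 2 ≤ L / 2 * D ^ 2 := by
        have h2 : ‖x 1 ω - x0‖ ^ 2 ≤ D ^ 2 := by
          nlinarith [hdist, norm_nonneg (x 1 ω - x0)]
        nlinarith [h2, hL.le]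
      have hisub := inner_sub_left (𝕜 := ℝ) (gradient f x0) (svec 0 ω) (x 1 ω - x0)
      rw [hx0' ω]
      simp only [hw]
      nlinarith [hdesc, hin, hsq]
    have hintRHS : Integrable
        (fun ω => (f x0 + L / 2 * D ^ 2) + D * ‖svec 0 ω - gradient f (x 0 ω)‖) P :=
      (integrable_const _).add ((hint_nrm 0 (by omega)).const_mul D)
    have h1 := integral_mono hintsub hintRHS hptw
    have h2 : ∫ ω, ((f x0 + L / 2 * D ^ 2) + D * ‖svec 0 ω - gradient f (x 0 ω)‖) ∂P =
        (f x0 + L / 2 * D ^ 2) + D * ∫ ω, ‖svec 0 ω - gradient f (x 0 ω)‖ ∂P := by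
      rw [integral_add (integrable_const _) ((hint_nrm 0 (by omega)).const_mul D),
        integral_const_mul]
      simp
    have h3 : D * ∫ ω, ‖svec 0 ω - gradient f (x 0 ω)‖ ∂P ≤ D * σ :=
      mul_le_mul_of_nonneg_left (hEnorm 0 (by omega)) hD.le
    rw [hsplit]
    rw [h2] at h1
    linarith
  -- alpha bound
  have hαlam : (1 - α) * (L / 2 + (I : ℝ) / (4 * lam)) ≤ α * (1 / (2 * lam)) := by
    have hden : (0:ℝ) < 1 + (I : ℝ) / 2 + lam * L := by positivity
    rw [div_le_iff₀ hden] at hαbound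
    have key : (1 - α) * ((I : ℝ) / 2 + lam * L) ≤ α := by nlinarith
    have e : (1 - α) * (L / 2 + (I : ℝ) / (4 * lam)) =
        (1 - α) * ((I : ℝ) / 2 + lam * L) / (2 * lam) := by
      field_simp; ring
    have e2 : α * (1 / (2 * lam)) = α / (2 * lam) := by ring
    rw [e, e2]
    exact (div_le_div_iff_of_pos_right (show (0:ℝ) < 2 * lam by positivity)).mpr key

  -- pathwise recursion
  have hrec : ∀ i, 1 ≤ i → i ≤ I → ∀ ω, t (i + 1) ω ≤
      α * t i ω + (1 - α) * (lam / I) * ‖svec i ω - gradient f (x i ω)‖ ^ 2 := by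
    intro i h1 h2 ω
    have hL2 := h𝓛rec (i + 1) (by omega) (by omega) ω (x (i + 1) ω)
    simp only [Nat.add_sub_cancel] at hL2
    have hu := hurec (i + 1) (by omega) (by omega) ω
    simp only [Nat.add_sub_cancel] at hu
    have hqg := qgrowth (𝓛 i ω) (hconvL i h1 (by omega) ω) lam hlam x0 (x i ω)
      (hxmem i h1 (by omega) ω) (fun y hy => hxmin i h1 (by omega) ω y hy)
      (x (i + 1) ω) (hxmem (i + 1) (by omega) (by omega) ω)
    have hdesc := descent_lemma f hf L hLip (x i ω) (x (i + 1) ω)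
    set ne' := ‖svec i ω - gradient f (x i ω)‖ with hne
    set nΔ := ‖x (i + 1) ω - x i ω‖ with hnΔ
    have hyoung : ne' * nΔ ≤ lam / I * ne' ^ 2 + (I : ℝ) / (4 * lam) * nΔ ^ 2 := by
      have key : 0 ≤ (2 * lam * ne' - (I : ℝ) * nΔ) ^ 2 := sq_nonneg _
      rw [div_mul_eq_mul_div, div_mul_eq_mul_div, ← sub_nonneg]
      have e1 : lam * ne' ^ 2 / I + (I : ℝ) * nΔ ^ 2 / (4 * lam) - ne' * nΔ =
          (2 * lam * ne' - (I : ℝ) * nΔ) ^ 2 / (4 * lam * I) := by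
        field_simp; ring
      rw [e1]
      positivity
    have hA2 : f (x (i + 1) ω) - f (x i ω) - ⟪svec i ω, x (i + 1) ω - x i ω⟫ ≤
        lam / I * ne' ^ 2 + (I : ℝ) / (4 * lam) * nΔ ^ 2 + L / 2 * nΔ ^ 2 := by
      have hin : ⟪gradient f (x i ω) - svec i ω, x (i + 1) ω - x i ω⟫ ≤ ne' * nΔ := by
        calc ⟪gradient f (x i ω) - svec i ω, x (i + 1) ω - x i ω⟫
            ≤ ‖gradient f (x i ω) - svec i ω‖ * ‖x (i + 1) ω - x i ω‖ :=
              real_inner_le_norm _ _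
          _ = ne' * nΔ := by rw [norm_sub_rev]
      have hisub := inner_sub_left (𝕜 := ℝ) (gradient f (x i ω)) (svec i ω)
        (x (i + 1) ω - x i ω)
      nlinarith [hdesc]
    have hB1' : u i ω - 𝓛 i ω (x (i + 1) ω) - 1 / (2 * lam) * ‖x (i + 1) ω - x0‖ ^ 2 ≤
        t i ω - 1 / (2 * lam) * nΔ ^ 2 := by
      rw [ht i ω]
      linarith [hqg]
    have hB1 := mul_le_mul_of_nonneg_left hB1' hα0.le
    have hB2 := mul_le_mul_of_nonneg_left hA2 (show (0:ℝ) ≤ 1 - α by linarith)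
    have hB3 := mul_le_mul_of_nonneg_left hαlam (sq_nonneg nΔ)
    rw [ht (i + 1) ω, hu, hL2]
    linarith [hB1, hB2, hB3]
  -- expectation recursion
  have hErec : ∀ i, 1 ≤ i → i ≤ I → ∫ ω, t (i + 1) ω ∂P ≤
      α * ∫ ω, t i ω ∂P + (1 - α) * (lam * σ ^ 2 / I) := by
    intro i h1 h2
    have hintRHS : Integrable (fun ω => α * t i ω +
        (1 - α) * (lam / I) * ‖svec i ω - gradient f (x i ω)‖ ^ 2) P :=
      ((hint_t i h1 (by omega)).const_mul α).add ((hint_var i h2).const_mul _)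
    have h3 := integral_mono (hint_t (i + 1) (by omega) (by omega)) hintRHS (hrec i h1 h2)
    have h4 : ∫ ω, (α * t i ω +
        (1 - α) * (lam / I) * ‖svec i ω - gradient f (x i ω)‖ ^ 2) ∂P =
        α * ∫ ω, t i ω ∂P +
          (1 - α) * (lam / I) * ∫ ω, ‖svec i ω - gradient f (x i ω)‖ ^ 2 ∂P := by
      rw [integral_add ((hint_t i h1 (by omega)).const_mul α)
        ((hint_var i h2).const_mul _), integral_const_mul, integral_const_mul]
    have h5 : (1 - α) * (lam / I) * ∫ ω, ‖svec i ω - gradient f (x i ω)‖ ^ 2 ∂P ≤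
        (1 - α) * (lam / I) * σ ^ 2 :=
      mul_le_mul_of_nonneg_left (hvar i h2)
        (mul_nonneg (by linarith) (by positivity))
    have h6 : (1 - α) * (lam / I) * σ ^ 2 = (1 - α) * (lam * σ ^ 2 / I) := by ring
    rw [h4] at h3
    linarith
  -- unrolling
  have hiter : ∀ k, k ≤ I → ∫ ω, t (k + 1) ω ∂P ≤
      α ^ k * (σ * D + L * D ^ 2 / 2) + lam * σ ^ 2 / I * (1 - α ^ k) := by
    intro k
    induction k with
    | zero => intro _; simpa using hEt1
    | succ n ih =>
      intro hn
      have ihn := ih (by omega)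
      have hstep := hErec (n + 1) (by omega) hn
      have h7 := mul_le_mul_of_nonneg_left ihn hα0.le
      have h8 : α * (α ^ n * (σ * D + L * D ^ 2 / 2) + lam * σ ^ 2 / I * (1 - α ^ n)) +
          (1 - α) * (lam * σ ^ 2 / I) =
          α ^ (n + 1) * (σ * D + L * D ^ 2 / 2) + lam * σ ^ 2 / I * (1 - α ^ (n + 1)) := by
        rw [pow_succ]; ring
      linarith
  have hfin := hiter I le_rfl
  have hKnn : 0 ≤ lam * σ ^ 2 / I := by positivity
  have hpow : 0 ≤ α ^ I := pow_nonneg hα0.le I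
  nlinarith [hfin]
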